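/- The bivariate sextic polynomial p(x_1, x_2) = 17x_1⁶ − 20x_1⁴ + 7x_1² + 18x_1 + 18x_2⁴ − 19x_2² − 19x_2 + 21 − 20x_1x_2 satisfies p(x) ≥ 0 for all x ∈ ℝ², but p is not a sum of squares of polynomials. -/

import Mathlib

set_option maxHeartbeats 2000000
open MvPolynomial

/-- A polynomial is a sum of squares. -/
def IsSOS {σ : Type*} (p : MvPolynomial σ ℝ) : Prop :=
  ∃ (m : ℕ) (q : Fin m → MvPolynomial σ ℝ), p = ∑ j, q j ^ 2

noncomputable def p6 : MvPolynomial (Fin 2) ℝ :=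
  17 * X 0 ^ 6 - 20 * X 0 ^ 4 + 7 * X 0 ^ 2 + 18 * X 0 +
    18 * X 1 ^ 4 - 19 * X 1 ^ 2 - 19 * X 1 + C 21 - 20 * X 0 * X 1

noncomputable def s (a b : ℕ) : Fin 2 →₀ ℕ := Finsupp.single 0 a + Finsupp.single 1 b

lemma s_apply0 (a b : ℕ) : (s a b) 0 = a := by simp [s, Finsupp.single_apply]
lemma s_apply1 (a b : ℕ) : (s a b) 1 = b := by simp [s, Finsupp.single_apply]

lemma eq_s_iff (f : Fin 2 →₀ ℕ) (a b : ℕ) : f = s a b ↔ f 0 = a ∧ f 1 = b := by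
  constructor
  · rintro rfl; exact ⟨s_apply0 a b, s_apply1 a b⟩
  · rintro ⟨h0, h1⟩
    ext i
    fin_cases i
    · simpa [s_apply0] using h0
    · simpa [s_apply1] using h1

lemma mono_s (a b : ℕ) (c : ℝ) : (monomial (s a b)) c = C c * X 0 ^ a * X 1 ^ b := by
  rw [s, monomial_single_add]
  rw [show (Finsupp.single (1:Fin 2) b) = Finsupp.single 1 b + 0 by simp]
  rw [monomial_single_add]
  simp [monomial_zero']
  ring

lemma hp6 : p6 = monomial (s 6 0) 17 + monomial (s 4 0) (-20) + monomial (s 2 0) 7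
    + monomial (s 1 0) 18 + monomial (s 0 4) 18 + monomial (s 0 2) (-19)
    + monomial (s 0 1) (-19) + monomial (s 0 0) 21 + monomial (s 1 1) (-20) := by
  rw [p6]
  simp only [mono_s, map_neg, map_ofNat]
  ring

lemma s_eq_s (a b c d : ℕ) : s a b = s c d ↔ a = c ∧ b = d := by
  rw [eq_s_iff, s_apply0, s_apply1]

lemma finsupp_eq (f g : Fin 2 →₀ ℕ) (h0 : f 0 = g 0) (h1 : f 1 = g 1) : f = g := by
  ext i; fin_cases i <;> assumption

/-- support bound for p6 at doubled exponents -/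
lemma coeff_double (β : Fin 2 →₀ ℕ) (h : MvPolynomial.coeff (β + β) p6 ≠ 0) :
    2 * β 0 + 3 * β 1 ≤ 6 := by
  by_contra hgt
  push_neg at hgt
  have h1 : ¬(s 6 0 = β + β) := by
    rw [eq_comm, eq_s_iff]; simp only [Finsupp.add_apply]; omega
  have h2 : ¬(s 4 0 = β + β) := by
    rw [eq_comm, eq_s_iff]; simp only [Finsupp.add_apply]; omega
  have h3 : ¬(s 2 0 = β + β) := by
    rw [eq_comm, eq_s_iff]; simp only [Finsupp.add_apply]; omega
  have h4 : ¬(s 1 0 = β + β) := by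
    rw [eq_comm, eq_s_iff]; simp only [Finsupp.add_apply]; omega
  have h5 : ¬(s 0 4 = β + β) := by
    rw [eq_comm, eq_s_iff]; simp only [Finsupp.add_apply]; omega
  have h6 : ¬(s 0 2 = β + β) := by
    rw [eq_comm, eq_s_iff]; simp only [Finsupp.add_apply]; omega
  have h7 : ¬(s 0 1 = β + β) := by
    rw [eq_comm, eq_s_iff]; simp only [Finsupp.add_apply]; omega
  have h8 : ¬(s 0 0 = β + β) := by
    rw [eq_comm, eq_s_iff]; simp only [Finsupp.add_apply]; omega
  have h9 : ¬(s 1 1 = β + β) := by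
    rw [eq_comm, eq_s_iff]; simp only [Finsupp.add_apply]; omega
  apply h
  rw [hp6]
  simp [coeff_add, coeff_monomial, h1, h2, h3, h4, h5, h6, h7, h8, h9]

noncomputable def Bfin : Finset (Fin 2 →₀ ℕ) := {s 0 0, s 1 0, s 2 0, s 3 0, s 0 1, s 1 1, s 0 2}

lemma sum_Bfin (g : (Fin 2 →₀ ℕ) → ℝ) :
    ∑ α ∈ Bfin, g α = g (s 0 0) + g (s 1 0) + g (s 2 0) + g (s 3 0)
      + g (s 0 1) + g (s 1 1) + g (s 0 2) := by
  simp [Bfin, Finset.sum_insert, Finset.mem_insert, Finset.mem_singleton, s_eq_s]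
  ring

theorem bivariate_sextic_nonneg_not_sos :
    (∀ x : Fin 2 → ℝ, 0 ≤ eval x p6) ∧ ¬ IsSOS p6 := by
  constructor
  · intro x
    have hev : eval x p6 = 17*(x 0)^6 - 20*(x 0)^4 + 7*(x 0)^2 + 18*(x 0)
        + 18*(x 1)^4 - 19*(x 1)^2 - 19*(x 1) + 21 - 20*(x 0)*(x 1) := by
      simp only [p6, map_add, map_sub, map_mul, map_pow, map_ofNat, eval_X, eval_C]
    rw [hev]
    set a := x 0 with ha
    set b := x 1 with hb
    have hm : (0:ℝ) < 1 + a^2 + b^2 := by positivity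
    have key : (1 + a^2 + b^2) * (17*a^6 - 20*a^4 + 7*a^2 + 18*a + 18*b^4 - 19*b^2 - 19*b + 21 - 20*a*b) = (21 : ℝ) * ((1 : ℝ)*1 + ((-19 : ℝ)/42)*b + ((-6131 : ℝ)/21000)*b^2 + ((-9923 : ℝ)/21000)*b^3 + ((3 : ℝ)/7)*a + ((-451 : ℝ)/1500)*a*b + ((593 : ℝ)/3150)*a*b^2 + ((4301 : ℝ)/15750)*a^2 + ((-2921 : ℝ)/31500)*a^2*b + ((4939 : ℝ)/21000)*a^3 + ((-797 : ℝ)/3500)*a^3*b + ((-34009 : ℝ)/105000)*a^4)^2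
        + ((52313 : ℝ)/5250) * ((1 : ℝ)*b + ((-98723 : ℝ)/418504)*b^2 + ((-386651 : ℝ)/418504)*b^3 + ((4047 : ℝ)/104626)*a + ((19005 : ℝ)/104626)*a*b + ((-56737 : ℝ)/627756)*a*b^2 + ((7858 : ℝ)/156939)*a^2 + ((-183713 : ℝ)/627756)*a^2*b + ((14293 : ℝ)/418504)*a^3 + ((22845 : ℝ)/104626)*a^3*b + ((905413 : ℝ)/4185040)*a^4)^2
        + ((637126045909 : ℝ)/104626000000) * ((1 : ℝ)*b^2 + ((-530316467603 : ℝ)/637126045909)*b^3 + ((972653129500 : ℝ)/1911378137727)*a + ((-362660098912 : ℝ)/1911378137727)*a*b + ((-193062063930 : ℝ)/637126045909)*a*b^2 + ((-650795497592 : ℝ)/13379646964089)*a^2 + ((651514476022 : ℝ)/4459882321363)*a^2*b + ((-126678009071 : ℝ)/637126045909)*a^3 + ((128938099544 : ℝ)/1911378137727)*a^3*b + ((-25498303391411 : ℝ)/44598823213630)*a^4)^2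
        + ((186962410945001 : ℝ)/318563022954500) * ((1 : ℝ)*b^3 + ((-733707309203377 : ℝ)/1121774465670006)*a + ((163742253567100 : ℝ)/186962410945001)*a*b + ((-955522169173097 : ℝ)/1121774465670006)*a*b^2 + ((10946812438561793 : ℝ)/7852421259690042)*a^2 + ((-382496928540340 : ℝ)/3926210629845021)*a^2*b + ((135854519896823 : ℝ)/1121774465670006)*a^3 + ((176674067826829 : ℝ)/1121774465670006)*a^3*b + ((-93936015227005043 : ℝ)/26174737532300140)*a^4)^2
        + ((36448573232793286327 : ℝ)/3365323397010018000) * ((1 : ℝ)*a + ((-912095682063730646 : ℝ)/5206939033256183761)*a*b + ((-173488864567722119069 : ℝ)/255140012629553004289)*a*b^2 + ((53471395499339706727 : ℝ)/255140012629553004289)*a^2 + ((-43904049193662997274 : ℝ)/255140012629553004289)*a^2*b + ((-52550506967442207947 : ℝ)/182242866163966431635)*a^3 + ((-10597834184872951271 : ℝ)/72897146465586572654)*a^3*b + ((67320563263522410483 : ℝ)/255140012629553004289)*a^4)^2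
        + ((3708096345909140180774027 : ℝ)/656074318190279153886000) * ((1 : ℝ)*a*b + ((72096248220753030391121 : ℝ)/3708096345909140180774027)*a*b^2 + ((167592830282698959676442 : ℝ)/3708096345909140180774027)*a^2 + ((-460829751077021029245162 : ℝ)/3708096345909140180774027)*a^2*b + ((524104672534171045416407 : ℝ)/37080963459091401807740270)*a^3 + ((-5888996241019996006602258 : ℝ)/3708096345909140180774027)*a^3*b + ((2558720408818640937345639 : ℝ)/74161926918182803615480540)*a^4)^2
        + ((10581150672166037886056741897147 : ℝ)/1907815569970252623008236891500) * ((1 : ℝ)*a*b^2 + ((168460023195824241252191746203 : ℝ)/21162301344332075772113483794294)*a^2 + ((-680633963654130649438467498989 : ℝ)/5771536730272384301485495580262)*a^2*b + ((-1219509626755487208238335704227517 : ℝ)/1269738080659924546326809027657640)*a^3 + ((-24573547764939350962205108315929 : ℝ)/84649205377328303088453935177176)*a^3*b + ((-479223426680415250301080809349 : ℝ)/3255738668358780888017459045276)*a^4)^2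
        + ((3533960262948249631996527744683543881 : ℝ)/5184763829361358564167803529602030000) * ((1 : ℝ)*a^2 + ((-10167174116765576781237353606830421365 : ℝ)/63611284733068493375937499404303789858)*a^2*b + ((-86315828130667739130809012542389739385 : ℝ)/127222569466136986751874998808607579716)*a^3 + ((23863215024557186312969962197639776825 : ℝ)/42407523155378995583958332936202526572)*a^3*b + ((-24091037306841346212601539539531130778 : ℝ)/10601880788844748895989583234050631643)*a^4)^2
        + ((6472236031980565399414309353937524337054829 : ℝ)/112210306269132822315153748949191885309512000) * ((1 : ℝ)*a^2*b + ((19972474076300875065293156545533224137084307 : ℝ)/64722360319805653994143093539375243370548290)*a^3 + ((2074593315451838443528552716122127831676119 : ℝ)/12944472063961130798828618707875048674109658)*a^3*b + ((-2966361845732352828518394431801285937961968 : ℝ)/32361180159902826997071546769687621685274145)*a^4)^2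
        + ((2616034970104397954447312326549284163856880884797 : ℝ)/15533366476753356958594342449450058408931589600000) * ((1 : ℝ)*a^3 + ((-222184836562471082774375156300706972655031346305 : ℝ)/2616034970104397954447312326549284163856880884797)*a^3*b + ((1195500964518308447475731399046430405759287570972 : ℝ)/2616034970104397954447312326549284163856880884797)*a^4)^2
        + ((12280224751172723749226022787385835069689539936153223 : ℝ)/54936734372192357043393558857534967440994498580737000) * ((1 : ℝ)*a^3*b + ((-377503110270494210670963110556254623616602853032562217 : ℝ)/982417980093817899938081822990866805575163194892257840)*a^4)^2
        + ((24527772809181514516455291462976258343349576252903050744623 : ℝ)/78593438407505431995046545839269344446013055591380627200000) * ((1 : ℝ)*a^4)^2 := by ring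
    have hmain : (0:ℝ) ≤ (1 + a^2 + b^2) * (17*a^6 - 20*a^4 + 7*a^2 + 18*a + 18*b^4 - 19*b^2 - 19*b + 21 - 20*a*b) := by
      rw [key]; positivity
    exact (mul_nonneg_iff_of_pos_left hm).mp hmain
  · rintro ⟨m, q, hpq⟩
    by_cases hSne : (Finset.univ.biUnion (fun j => (q j).support)).Nonempty
    swap
    · have hq0 : ∀ j, q j = 0 := by
        intro j
        rw [← MvPolynomial.support_eq_empty]
        have hempty := Finset.not_nonempty_iff_eq_empty.mp hSne
        apply Finset.eq_empty_of_forall_notMem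
        intro α hα
        have hmem : α ∈ Finset.univ.biUnion (fun j => (q j).support) :=
          Finset.mem_biUnion.mpr ⟨j, Finset.mem_univ j, hα⟩
        rw [hempty] at hmem
        exact absurd hmem (Finset.notMem_empty α)
      have hz : p6 = 0 := by
        rw [hpq]
        apply Finset.sum_eq_zero
        intro j _
        rw [hq0 j]
        ring
      have h21 : eval (fun _ => (0:ℝ)) p6 = 21 := by
        simp [p6]
      rw [hz] at h21
      simp at h21
    · set S := Finset.univ.biUnion (fun j => (q j).support) with hSdef
      obtain ⟨β₁, hβ₁S, hβ₁max⟩ := Finset.exists_max_image S (fun α => 2*α 0 + 3*α 1) hSne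
      have hS₁ne : (S.filter (fun α => 2*α 0 + 3*α 1 = 2*β₁ 0 + 3*β₁ 1)).Nonempty :=
        ⟨β₁, Finset.mem_filter.mpr ⟨hβ₁S, rfl⟩⟩
      obtain ⟨β, hβS₁, hβmax⟩ := Finset.exists_max_image _ (fun α => α 0) hS₁ne
      have hβS : β ∈ S := (Finset.mem_filter.mp hβS₁).1
      have hβW : 2*β 0 + 3*β 1 = 2*β₁ 0 + 3*β₁ 1 := (Finset.mem_filter.mp hβS₁).2
      have key : ∀ μ ν : Fin 2 →₀ ℕ, μ ∈ S → ν ∈ S → μ + ν = β + β → μ = β ∧ ν = β := by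
        intro μ ν hμ hν hsum
        have e0 : μ 0 + ν 0 = β 0 + β 0 := by
          rw [← Finsupp.add_apply, ← Finsupp.add_apply, hsum]
        have e1 : μ 1 + ν 1 = β 1 + β 1 := by
          rw [← Finsupp.add_apply, ← Finsupp.add_apply, hsum]
        have wμ := hβ₁max μ hμ
        have wν := hβ₁max ν hν
        have hμW : 2*μ 0 + 3*μ 1 = 2*β₁ 0 + 3*β₁ 1 := by omega
        have hνW : 2*ν 0 + 3*ν 1 = 2*β₁ 0 + 3*β₁ 1 := by omega
        have zμ := hβmax μ (Finset.mem_filter.mpr ⟨hμ, hμW⟩)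
        have zν := hβmax ν (Finset.mem_filter.mpr ⟨hν, hνW⟩)
        have hco : μ 0 = β 0 ∧ μ 1 = β 1 ∧ ν 0 = β 0 ∧ ν 1 = β 1 := by omega
        exact ⟨finsupp_eq _ _ hco.1 hco.2.1, finsupp_eq _ _ hco.2.2.1 hco.2.2.2⟩
      have hcoeff : coeff (β + β) p6 = ∑ j, (coeff β (q j))^2 := by
        rw [hpq, coeff_sum]
        apply Finset.sum_congr rfl
        intro j _
        rw [sq, coeff_mul]
        rw [Finset.sum_eq_single (β, β)]
        · simp [sq]
        · intro x hx hne
          by_contra h0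
          have hx1 : coeff x.1 (q j) ≠ 0 := fun hh => h0 (by rw [hh]; ring)
          have hx2 : coeff x.2 (q j) ≠ 0 := fun hh => h0 (by rw [hh]; ring)
          have hμS : x.1 ∈ S := Finset.mem_biUnion.mpr
            ⟨j, Finset.mem_univ j, MvPolynomial.mem_support_iff.mpr hx1⟩
          have hνS : x.2 ∈ S := Finset.mem_biUnion.mpr
            ⟨j, Finset.mem_univ j, MvPolynomial.mem_support_iff.mpr hx2⟩
          have hxx := key x.1 x.2 hμS hνS (Finset.HasAntidiagonal.mem_antidiagonal.mp hx)
          apply hne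
          rw [Prod.ext_iff]
          exact ⟨hxx.1, hxx.2⟩
        · intro hmem
          exact absurd ((Finset.HasAntidiagonal.mem_antidiagonal (a := ((β, β) : (Fin 2 →₀ ℕ) × (Fin 2 →₀ ℕ)))).mpr rfl) hmem
      obtain ⟨j₀, _, hj₀⟩ := Finset.mem_biUnion.mp hβS
      have hcβ : coeff β (q j₀) ≠ 0 := MvPolynomial.mem_support_iff.mp hj₀
      have hpos : (0:ℝ) < ∑ j, (coeff β (q j))^2 := by
        apply Finset.sum_pos' (fun i _ => sq_nonneg _)
        exact ⟨j₀, Finset.mem_univ _, lt_of_le_of_ne (sq_nonneg _) (Ne.symm (pow_ne_zero 2 hcβ))⟩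
      have hw6 : 2*β 0 + 3*β 1 ≤ 6 := coeff_double β (by rw [hcoeff]; exact ne_of_gt hpos)
      have hallw : ∀ α ∈ S, 2*α 0 + 3*α 1 ≤ 6 := by
        intro α hα
        have hh := hβ₁max α hα
        omega
      have hsupp : ∀ j, (q j).support ⊆ Bfin := by
        intro j α hα
        have hαS : α ∈ S := Finset.mem_biUnion.mpr ⟨j, Finset.mem_univ j, hα⟩
        have hw := hallw α hαS
        have hcases : (α 0 = 0 ∧ α 1 = 0) ∨ (α 0 = 1 ∧ α 1 = 0) ∨ (α 0 = 2 ∧ α 1 = 0)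
            ∨ (α 0 = 3 ∧ α 1 = 0) ∨ (α 0 = 0 ∧ α 1 = 1) ∨ (α 0 = 1 ∧ α 1 = 1)
            ∨ (α 0 = 0 ∧ α 1 = 2) := by omega
        rcases hcases with h|h|h|h|h|h|h <;>
          (rw [(eq_s_iff α _ _).mpr ⟨h.1, h.2⟩] ; simp [Bfin, Finset.mem_insert, s_eq_s])
      have hev : ∀ j (u v : ℝ), eval ![u, v] (q j) =
          coeff (s 0 0) (q j) + coeff (s 1 0) (q j) * u + coeff (s 2 0) (q j) * u^2
          + coeff (s 3 0) (q j) * u^3 + coeff (s 0 1) (q j) * v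
          + coeff (s 1 1) (q j) * (u*v) + coeff (s 0 2) (q j) * v^2 := by
        intro j u v
        rw [eval_eq']
        rw [Finset.sum_subset (hsupp j) (by
          intro y _ hy
          simp [MvPolynomial.notMem_support_iff.mp hy])]
        rw [sum_Bfin (fun α => coeff α (q j) * ∏ i, (![u,v]) i ^ α i)]
        simp only [Fin.prod_univ_two, s_apply0, s_apply1,
          Matrix.cons_val_zero, Matrix.cons_val_one, Matrix.head_cons]
        ring
      have keyj : ∀ j, (0:ℝ) ≤ ((6263410531 : ℝ)/144000000) * (eval ![(-3 : ℝ), (-3 : ℝ)] (q j))^2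
          + ((-225756041 : ℝ)/1600000) * (eval ![(-3 : ℝ), (-2 : ℝ)] (q j))^2
          + ((39200903 : ℝ)/250000) * (eval ![(-3 : ℝ), (-1 : ℝ)] (q j))^2
          + ((-48148747 : ℝ)/750000) * (eval ![(-3 : ℝ), (0 : ℝ)] (q j))^2
          + ((20022889 : ℝ)/4000000) * (eval ![(-3 : ℝ), (1 : ℝ)] (q j))^2
          + ((-885741109 : ℝ)/20000000) * (eval ![(-2 : ℝ), (-3 : ℝ)] (q j))^2
          + ((465627139 : ℝ)/3000000) * (eval ![(-2 : ℝ), (-2 : ℝ)] (q j))^2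
          + ((-711903133 : ℝ)/4000000) * (eval ![(-2 : ℝ), (-1 : ℝ)] (q j))^2
          + ((200813111 : ℝ)/3000000) * (eval ![(-2 : ℝ), (0 : ℝ)] (q j))^2
          + ((-1423257529 : ℝ)/48000000) * (eval ![(-1 : ℝ), (-3 : ℝ)] (q j))^2
          + ((45345799 : ℝ)/800000) * (eval ![(-1 : ℝ), (-2 : ℝ)] (q j))^2
          + ((-12297831 : ℝ)/500000) * (eval ![(-1 : ℝ), (-1 : ℝ)] (q j))^2
          + ((237879671 : ℝ)/7200000) * (eval ![(0 : ℝ), (-3 : ℝ)] (q j))^2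
          + ((-36923637 : ℝ)/500000) * (eval ![(0 : ℝ), (-2 : ℝ)] (q j))^2
          + ((177192941 : ℝ)/4000000) * (eval ![(0 : ℝ), (-1 : ℝ)] (q j))^2
          + ((-26020129 : ℝ)/9600000) * (eval ![(1 : ℝ), (-3 : ℝ)] (q j))^2
          + ((90578149 : ℝ)/24000000) * (eval ![(1 : ℝ), (-2 : ℝ)] (q j))^2
          + ((-121633 : ℝ)/6000000) * (eval ![(2 : ℝ), (-3 : ℝ)] (q j))^2
          + ((-211681 : ℝ)/720000000) * (eval ![(3 : ℝ), (-3 : ℝ)] (q j))^2 := by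
        intro j
        have iden : ((6263410531 : ℝ)/144000000) * (eval ![(-3 : ℝ), (-3 : ℝ)] (q j))^2
          + ((-225756041 : ℝ)/1600000) * (eval ![(-3 : ℝ), (-2 : ℝ)] (q j))^2
          + ((39200903 : ℝ)/250000) * (eval ![(-3 : ℝ), (-1 : ℝ)] (q j))^2
          + ((-48148747 : ℝ)/750000) * (eval ![(-3 : ℝ), (0 : ℝ)] (q j))^2
          + ((20022889 : ℝ)/4000000) * (eval ![(-3 : ℝ), (1 : ℝ)] (q j))^2
          + ((-885741109 : ℝ)/20000000) * (eval ![(-2 : ℝ), (-3 : ℝ)] (q j))^2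
          + ((465627139 : ℝ)/3000000) * (eval ![(-2 : ℝ), (-2 : ℝ)] (q j))^2
          + ((-711903133 : ℝ)/4000000) * (eval ![(-2 : ℝ), (-1 : ℝ)] (q j))^2
          + ((200813111 : ℝ)/3000000) * (eval ![(-2 : ℝ), (0 : ℝ)] (q j))^2
          + ((-1423257529 : ℝ)/48000000) * (eval ![(-1 : ℝ), (-3 : ℝ)] (q j))^2
          + ((45345799 : ℝ)/800000) * (eval ![(-1 : ℝ), (-2 : ℝ)] (q j))^2
          + ((-12297831 : ℝ)/500000) * (eval ![(-1 : ℝ), (-1 : ℝ)] (q j))^2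
          + ((237879671 : ℝ)/7200000) * (eval ![(0 : ℝ), (-3 : ℝ)] (q j))^2
          + ((-36923637 : ℝ)/500000) * (eval ![(0 : ℝ), (-2 : ℝ)] (q j))^2
          + ((177192941 : ℝ)/4000000) * (eval ![(0 : ℝ), (-1 : ℝ)] (q j))^2
          + ((-26020129 : ℝ)/9600000) * (eval ![(1 : ℝ), (-3 : ℝ)] (q j))^2
          + ((90578149 : ℝ)/24000000) * (eval ![(1 : ℝ), (-2 : ℝ)] (q j))^2
          + ((-121633 : ℝ)/6000000) * (eval ![(2 : ℝ), (-3 : ℝ)] (q j))^2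
          + ((-211681 : ℝ)/720000000) * (eval ![(3 : ℝ), (-3 : ℝ)] (q j))^2
            = ((6861583 : ℝ)/1000000) * (coeff (s 0 0) (q j) + ((-1209135 : ℝ)/6861583)*coeff (s 1 0) (q j) + ((3035430 : ℝ)/6861583)*coeff (s 2 0) (q j) + ((-866550 : ℝ)/6861583)*coeff (s 3 0) (q j) + ((5437652 : ℝ)/6861583)*coeff (s 0 1) (q j) + ((-43410 : ℝ)/6861583)*coeff (s 1 1) (q j) + ((5207959 : ℝ)/6861583)*coeff (s 0 2) (q j))^2
          + ((3873169487493 : ℝ)/1372316600000) * (coeff (s 1 0) (q j) + ((-151710673040 : ℝ)/1291056495831)*coeff (s 2 0) (q j) + ((13043898242348 : ℝ)/19365847437465)*coeff (s 3 0) (q j) + ((418466268866 : ℝ)/1291056495831)*coeff (s 0 1) (q j) + ((4281244396552 : ℝ)/6455282479155)*coeff (s 1 1) (q j) + ((5309935836089 : ℝ)/19365847437465)*coeff (s 0 2) (q j))^2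
          + ((144580914298008731 : ℝ)/215176082638500000) * (coeff (s 2 0) (q j) + ((-65910064710874271 : ℝ)/867485485788052386)*coeff (s 3 0) (q j) + ((-90057929905211963 : ℝ)/144580914298008731)*coeff (s 0 1) (q j) + ((104173524689245145 : ℝ)/289161828596017462)*coeff (s 1 1) (q j) + ((74338885278540463 : ℝ)/867485485788052386)*coeff (s 0 2) (q j))^2
          + ((79401232427606620818187 : ℝ)/13012282286820785790000000) * (coeff (s 3 0) (q j) + ((542098482938700990663840 : ℝ)/79401232427606620818187)*coeff (s 0 1) (q j) + ((-897421576320907599236481 : ℝ)/79401232427606620818187)*coeff (s 1 1) (q j) + ((9730229890913363641 : ℝ)/79401232427606620818187)*coeff (s 0 2) (q j))^2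
          + ((4533771669091267867429767039 : ℝ)/79401232427606620818187000000) * (coeff (s 0 1) (q j) + ((-7506542626723735697725948297 : ℝ)/4533771669091267867429767039)*coeff (s 1 1) (q j) + ((-423535241492902125582299 : ℝ)/4533771669091267867429767039)*coeff (s 0 2) (q j))^2
          + ((3180248713929368410816481223109 : ℝ)/566721458636408483428720879875000) * (coeff (s 1 1) (q j) + ((-2061826571267216237460620503 : ℝ)/12720994855717473643265924892436)*coeff (s 0 2) (q j))^2
          + ((6119171559776138386479432155794089 : ℝ)/6360497427858736821632962446218000000) * (coeff (s 0 2) (q j))^2 := by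
          rw [hev j (-3 : ℝ) (-3 : ℝ)]
          rw [hev j (-3 : ℝ) (-2 : ℝ)]
          rw [hev j (-3 : ℝ) (-1 : ℝ)]
          rw [hev j (-3 : ℝ) (0 : ℝ)]
          rw [hev j (-3 : ℝ) (1 : ℝ)]
          rw [hev j (-2 : ℝ) (-3 : ℝ)]
          rw [hev j (-2 : ℝ) (-2 : ℝ)]
          rw [hev j (-2 : ℝ) (-1 : ℝ)]
          rw [hev j (-2 : ℝ) (0 : ℝ)]
          rw [hev j (-1 : ℝ) (-3 : ℝ)]
          rw [hev j (-1 : ℝ) (-2 : ℝ)]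
          rw [hev j (-1 : ℝ) (-1 : ℝ)]
          rw [hev j (0 : ℝ) (-3 : ℝ)]
          rw [hev j (0 : ℝ) (-2 : ℝ)]
          rw [hev j (0 : ℝ) (-1 : ℝ)]
          rw [hev j (1 : ℝ) (-3 : ℝ)]
          rw [hev j (1 : ℝ) (-2 : ℝ)]
          rw [hev j (2 : ℝ) (-3 : ℝ)]
          rw [hev j (3 : ℝ) (-3 : ℝ)]
          ring
        rw [iden]
        positivity
      have hsum : (0:ℝ) ≤ ∑ j, (((6263410531 : ℝ)/144000000) * (eval ![(-3 : ℝ), (-3 : ℝ)] (q j))^2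
          + ((-225756041 : ℝ)/1600000) * (eval ![(-3 : ℝ), (-2 : ℝ)] (q j))^2
          + ((39200903 : ℝ)/250000) * (eval ![(-3 : ℝ), (-1 : ℝ)] (q j))^2
          + ((-48148747 : ℝ)/750000) * (eval ![(-3 : ℝ), (0 : ℝ)] (q j))^2
          + ((20022889 : ℝ)/4000000) * (eval ![(-3 : ℝ), (1 : ℝ)] (q j))^2
          + ((-885741109 : ℝ)/20000000) * (eval ![(-2 : ℝ), (-3 : ℝ)] (q j))^2
          + ((465627139 : ℝ)/3000000) * (eval ![(-2 : ℝ), (-2 : ℝ)] (q j))^2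
          + ((-711903133 : ℝ)/4000000) * (eval ![(-2 : ℝ), (-1 : ℝ)] (q j))^2
          + ((200813111 : ℝ)/3000000) * (eval ![(-2 : ℝ), (0 : ℝ)] (q j))^2
          + ((-1423257529 : ℝ)/48000000) * (eval ![(-1 : ℝ), (-3 : ℝ)] (q j))^2
          + ((45345799 : ℝ)/800000) * (eval ![(-1 : ℝ), (-2 : ℝ)] (q j))^2
          + ((-12297831 : ℝ)/500000) * (eval ![(-1 : ℝ), (-1 : ℝ)] (q j))^2
          + ((237879671 : ℝ)/7200000) * (eval ![(0 : ℝ), (-3 : ℝ)] (q j))^2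
          + ((-36923637 : ℝ)/500000) * (eval ![(0 : ℝ), (-2 : ℝ)] (q j))^2
          + ((177192941 : ℝ)/4000000) * (eval ![(0 : ℝ), (-1 : ℝ)] (q j))^2
          + ((-26020129 : ℝ)/9600000) * (eval ![(1 : ℝ), (-3 : ℝ)] (q j))^2
          + ((90578149 : ℝ)/24000000) * (eval ![(1 : ℝ), (-2 : ℝ)] (q j))^2
          + ((-121633 : ℝ)/6000000) * (eval ![(2 : ℝ), (-3 : ℝ)] (q j))^2
          + ((-211681 : ℝ)/720000000) * (eval ![(3 : ℝ), (-3 : ℝ)] (q j))^2) :=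
        Finset.sum_nonneg (fun j _ => keyj j)
      simp only [Finset.sum_add_distrib, ← Finset.mul_sum] at hsum
      have E0 : ∑ j, (eval ![(-3 : ℝ), (-3 : ℝ)] (q j))^2 = (11967 : ℝ) := by
        have h := congrArg (eval ![(-3 : ℝ), (-3 : ℝ)]) hpq
        simp only [map_sum, map_pow] at h
        rw [← h]
        simp only [p6, map_add, map_sub, map_mul, map_pow, map_ofNat, eval_X, eval_C,
          Matrix.cons_val_zero, Matrix.cons_val_one, Matrix.head_cons]
        norm_num
      have E1 : ∑ j, (eval ![(-3 : ℝ), (-2 : ℝ)] (q j))^2 = (10933 : ℝ) := by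
        have h := congrArg (eval ![(-3 : ℝ), (-2 : ℝ)]) hpq
        simp only [map_sum, map_pow] at h
        rw [← h]
        simp only [p6, map_add, map_sub, map_mul, map_pow, map_ofNat, eval_X, eval_C,
          Matrix.cons_val_zero, Matrix.cons_val_one, Matrix.head_cons]
        norm_num
      have E2 : ∑ j, (eval ![(-3 : ℝ), (-1 : ℝ)] (q j))^2 = (10761 : ℝ) := by
        have h := congrArg (eval ![(-3 : ℝ), (-1 : ℝ)]) hpq
        simp only [map_sum, map_pow] at h
        rw [← h]
        simp only [p6, map_add, map_sub, map_mul, map_pow, map_ofNat, eval_X, eval_C,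
          Matrix.cons_val_zero, Matrix.cons_val_one, Matrix.head_cons]
        norm_num
      have E3 : ∑ j, (eval ![(-3 : ℝ), (0 : ℝ)] (q j))^2 = (10803 : ℝ) := by
        have h := congrArg (eval ![(-3 : ℝ), (0 : ℝ)]) hpq
        simp only [map_sum, map_pow] at h
        rw [← h]
        simp only [p6, map_add, map_sub, map_mul, map_pow, map_ofNat, eval_X, eval_C,
          Matrix.cons_val_zero, Matrix.cons_val_one, Matrix.head_cons]
        norm_num
      have E4 : ∑ j, (eval ![(-3 : ℝ), (1 : ℝ)] (q j))^2 = (10843 : ℝ) := by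
        have h := congrArg (eval ![(-3 : ℝ), (1 : ℝ)]) hpq
        simp only [map_sum, map_pow] at h
        rw [← h]
        simp only [p6, map_add, map_sub, map_mul, map_pow, map_ofNat, eval_X, eval_C,
          Matrix.cons_val_zero, Matrix.cons_val_one, Matrix.head_cons]
        norm_num
      have E5 : ∑ j, (eval ![(-2 : ℝ), (-3 : ℝ)] (q j))^2 = (2005 : ℝ) := by
        have h := congrArg (eval ![(-2 : ℝ), (-3 : ℝ)]) hpq
        simp only [map_sum, map_pow] at h
        rw [← h]
        simp only [p6, map_add, map_sub, map_mul, map_pow, map_ofNat, eval_X, eval_C,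
          Matrix.cons_val_zero, Matrix.cons_val_one, Matrix.head_cons]
        norm_num
      have E6 : ∑ j, (eval ![(-2 : ℝ), (-2 : ℝ)] (q j))^2 = (951 : ℝ) := by
        have h := congrArg (eval ![(-2 : ℝ), (-2 : ℝ)]) hpq
        simp only [map_sum, map_pow] at h
        rw [← h]
        simp only [p6, map_add, map_sub, map_mul, map_pow, map_ofNat, eval_X, eval_C,
          Matrix.cons_val_zero, Matrix.cons_val_one, Matrix.head_cons]
        norm_num
      have E7 : ∑ j, (eval ![(-2 : ℝ), (-1 : ℝ)] (q j))^2 = (759 : ℝ) := by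
        have h := congrArg (eval ![(-2 : ℝ), (-1 : ℝ)]) hpq
        simp only [map_sum, map_pow] at h
        rw [← h]
        simp only [p6, map_add, map_sub, map_mul, map_pow, map_ofNat, eval_X, eval_C,
          Matrix.cons_val_zero, Matrix.cons_val_one, Matrix.head_cons]
        norm_num
      have E8 : ∑ j, (eval ![(-2 : ℝ), (0 : ℝ)] (q j))^2 = (781 : ℝ) := by
        have h := congrArg (eval ![(-2 : ℝ), (0 : ℝ)]) hpq
        simp only [map_sum, map_pow] at h
        rw [← h]
        simp only [p6, map_add, map_sub, map_mul, map_pow, map_ofNat, eval_X, eval_C,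
          Matrix.cons_val_zero, Matrix.cons_val_one, Matrix.head_cons]
        norm_num
      have E9 : ∑ j, (eval ![(-1 : ℝ), (-3 : ℝ)] (q j))^2 = (1291 : ℝ) := by
        have h := congrArg (eval ![(-1 : ℝ), (-3 : ℝ)]) hpq
        simp only [map_sum, map_pow] at h
        rw [← h]
        simp only [p6, map_add, map_sub, map_mul, map_pow, map_ofNat, eval_X, eval_C,
          Matrix.cons_val_zero, Matrix.cons_val_one, Matrix.head_cons]
        norm_num
      have E10 : ∑ j, (eval ![(-1 : ℝ), (-2 : ℝ)] (q j))^2 = (217 : ℝ) := by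
        have h := congrArg (eval ![(-1 : ℝ), (-2 : ℝ)]) hpq
        simp only [map_sum, map_pow] at h
        rw [← h]
        simp only [p6, map_add, map_sub, map_mul, map_pow, map_ofNat, eval_X, eval_C,
          Matrix.cons_val_zero, Matrix.cons_val_one, Matrix.head_cons]
        norm_num
      have E11 : ∑ j, (eval ![(-1 : ℝ), (-1 : ℝ)] (q j))^2 = (5 : ℝ) := by
        have h := congrArg (eval ![(-1 : ℝ), (-1 : ℝ)]) hpq
        simp only [map_sum, map_pow] at h
        rw [← h]
        simp only [p6, map_add, map_sub, map_mul, map_pow, map_ofNat, eval_X, eval_C,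
          Matrix.cons_val_zero, Matrix.cons_val_one, Matrix.head_cons]
        norm_num
      have E12 : ∑ j, (eval ![(0 : ℝ), (-3 : ℝ)] (q j))^2 = (1365 : ℝ) := by
        have h := congrArg (eval ![(0 : ℝ), (-3 : ℝ)]) hpq
        simp only [map_sum, map_pow] at h
        rw [← h]
        simp only [p6, map_add, map_sub, map_mul, map_pow, map_ofNat, eval_X, eval_C,
          Matrix.cons_val_zero, Matrix.cons_val_one, Matrix.head_cons]
        norm_num
      have E13 : ∑ j, (eval ![(0 : ℝ), (-2 : ℝ)] (q j))^2 = (271 : ℝ) := by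
        have h := congrArg (eval ![(0 : ℝ), (-2 : ℝ)]) hpq
        simp only [map_sum, map_pow] at h
        rw [← h]
        simp only [p6, map_add, map_sub, map_mul, map_pow, map_ofNat, eval_X, eval_C,
          Matrix.cons_val_zero, Matrix.cons_val_one, Matrix.head_cons]
        norm_num
      have E14 : ∑ j, (eval ![(0 : ℝ), (-1 : ℝ)] (q j))^2 = (39 : ℝ) := by
        have h := congrArg (eval ![(0 : ℝ), (-1 : ℝ)]) hpq
        simp only [map_sum, map_pow] at h
        rw [← h]
        simp only [p6, map_add, map_sub, map_mul, map_pow, map_ofNat, eval_X, eval_C,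
          Matrix.cons_val_zero, Matrix.cons_val_one, Matrix.head_cons]
        norm_num
      have E15 : ∑ j, (eval ![(1 : ℝ), (-3 : ℝ)] (q j))^2 = (1447 : ℝ) := by
        have h := congrArg (eval ![(1 : ℝ), (-3 : ℝ)]) hpq
        simp only [map_sum, map_pow] at h
        rw [← h]
        simp only [p6, map_add, map_sub, map_mul, map_pow, map_ofNat, eval_X, eval_C,
          Matrix.cons_val_zero, Matrix.cons_val_one, Matrix.head_cons]
        norm_num
      have E16 : ∑ j, (eval ![(1 : ℝ), (-2 : ℝ)] (q j))^2 = (333 : ℝ) := by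
        have h := congrArg (eval ![(1 : ℝ), (-2 : ℝ)]) hpq
        simp only [map_sum, map_pow] at h
        rw [← h]
        simp only [p6, map_add, map_sub, map_mul, map_pow, map_ofNat, eval_X, eval_C,
          Matrix.cons_val_zero, Matrix.cons_val_one, Matrix.head_cons]
        norm_num
      have E17 : ∑ j, (eval ![(2 : ℝ), (-3 : ℝ)] (q j))^2 = (2317 : ℝ) := by
        have h := congrArg (eval ![(2 : ℝ), (-3 : ℝ)]) hpq
        simp only [map_sum, map_pow] at h
        rw [← h]
        simp only [p6, map_add, map_sub, map_mul, map_pow, map_ofNat, eval_X, eval_C,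
          Matrix.cons_val_zero, Matrix.cons_val_one, Matrix.head_cons]
        norm_num
      have E18 : ∑ j, (eval ![(3 : ℝ), (-3 : ℝ)] (q j))^2 = (12435 : ℝ) := by
        have h := congrArg (eval ![(3 : ℝ), (-3 : ℝ)]) hpq
        simp only [map_sum, map_pow] at h
        rw [← h]
        simp only [p6, map_add, map_sub, map_mul, map_pow, map_ofNat, eval_X, eval_C,
          Matrix.cons_val_zero, Matrix.cons_val_one, Matrix.head_cons]
        norm_num
      rw [E0, E1, E2, E3, E4, E5, E6, E7, E8, E9, E10, E11, E12, E13, E14, E15, E16, E17, E18] at hsum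
      norm_num at hsum
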